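/- Let A = {(0,0)} ⊆ ℝ² and Ω = {(x,y) ∈ ℝ² : 0 < y < x^α, 0 < x < 1} with α > 1. Then the relative box dimension dim_B(A, Ω) exists and equals 1 − α, and the relative Minkowski content satisfies M^{1-α}(A, Ω) = 1/(1+α). -/

import Mathlib

open MeasureTheory Metric Filter Set Topology

/-- The relative upper `r`-dimensional Minkowski content of `(A, Ω)` in `ℝ^N`. -/
noncomputable def relUpperMinkowskiContent (N : ℕ) (A Ω : Set (EuclideanSpace ℝ (Fin N)))
    (r : ℝ) : ENNReal :=
  Filter.limsup
    (fun t : ℝ =>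
      volume (Metric.thickening t A ∩ Ω) / ENNReal.ofReal (t ^ ((N : ℝ) - r)))
    (nhdsWithin 0 (Set.Ioi 0))

/-- The relative lower `r`-dimensional Minkowski content of `(A, Ω)` in `ℝ^N`. -/
noncomputable def relLowerMinkowskiContent (N : ℕ) (A Ω : Set (EuclideanSpace ℝ (Fin N)))
    (r : ℝ) : ENNReal :=
  Filter.liminf
    (fun t : ℝ =>
      volume (Metric.thickening t A ∩ Ω) / ENNReal.ofReal (t ^ ((N : ℝ) - r)))
    (nhdsWithin 0 (Set.Ioi 0))

/-- The relative upper box dimension of `(A, Ω)`. -/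
noncomputable def relUpperBoxDim (N : ℕ) (A Ω : Set (EuclideanSpace ℝ (Fin N))) : ℝ :=
  sInf {r : ℝ | relUpperMinkowskiContent N A Ω r = 0}

/-- The relative lower box dimension of `(A, Ω)`. -/
noncomputable def relLowerBoxDim (N : ℕ) (A Ω : Set (EuclideanSpace ℝ (Fin N))) : ℝ :=
  sInf {r : ℝ | relLowerMinkowskiContent N A Ω r = 0}

namespace Stmt4Aux

lemma volS (α s : ℝ) (hα : 0 < α) (hs : 0 < s) :
    volume {p : EuclideanSpace ℝ (Fin 2) | 0 < p 0 ∧ p 0 < s ∧ 0 < p 1 ∧ p 1 < p 0 ^ α}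
      = ENNReal.ofReal (s ^ (α+1) / (α+1)) := by
  have hmp : MeasurePreserving
      (fun p : EuclideanSpace ℝ (Fin 2) => MeasurableEquiv.piFinTwo (fun _ : Fin 2 => ℝ)
        ((MeasurableEquiv.toLp 2 (Fin 2 → ℝ)).symm p)) volume volume :=
    (volume_preserving_piFinTwo (fun _ : Fin 2 => ℝ)).comp
      (EuclideanSpace.volume_preserving_symm_measurableEquiv_toLp (Fin 2))
  have hT : MeasurableSet (regionBetween (fun _ : ℝ => (0:ℝ)) (fun x => x ^ α) (Ioo 0 s)) :=
    measurableSet_regionBetween measurable_const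
      (Measurable.pow measurable_id measurable_const) measurableSet_Ioo
  have hpre : {p : EuclideanSpace ℝ (Fin 2) | 0 < p 0 ∧ p 0 < s ∧ 0 < p 1 ∧ p 1 < p 0 ^ α}
      = (fun p : EuclideanSpace ℝ (Fin 2) => MeasurableEquiv.piFinTwo (fun _ : Fin 2 => ℝ)
        ((MeasurableEquiv.toLp 2 (Fin 2 → ℝ)).symm p)) ⁻¹'
        (regionBetween (fun _ : ℝ => (0:ℝ)) (fun x => x ^ α) (Ioo 0 s)) := by
    ext p
    simp [regionBetween, MeasurableEquiv.piFinTwo, and_assoc]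
  rw [hpre, hmp.measure_preimage hT.nullMeasurableSet]
  have hint : IntegrableOn (fun x : ℝ => x ^ α) (Ioo 0 s) := by
    have := (intervalIntegral.intervalIntegrable_rpow' (a := 0) (b := s)
      (by linarith : (-1:ℝ) < α))
    rw [intervalIntegrable_iff, uIoc_of_le hs.le] at this
    exact this.mono_set Ioo_subset_Ioc_self
  rw [Measure.volume_eq_prod]
  rw [volume_regionBetween_eq_integral (integrableOn_const measure_Ioo_lt_top.ne)
    hint measurableSet_Ioo (fun x hx => Real.rpow_nonneg hx.1.le α)]
  congr 1
  have : ((fun x : ℝ => x ^ α) - (fun _ => (0:ℝ))) = fun y : ℝ => y ^ α := by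
    funext y; simp
  rw [this, ← integral_Ioc_eq_integral_Ioo, ← intervalIntegral.integral_of_le hs.le,
    integral_rpow (Or.inl (by linarith))]
  rw [Real.zero_rpow (by linarith : α + 1 ≠ 0)]
  ring

lemma norm_sq_eq (p : EuclideanSpace ℝ (Fin 2)) : ‖p‖ = Real.sqrt ((p 0)^2 + (p 1)^2) := by
  rw [EuclideanSpace.norm_eq, Fin.sum_univ_two]
  simp [sq_abs]

lemma upper_incl (α t : ℝ) :
    ball (0 : EuclideanSpace ℝ (Fin 2)) t ∩
      {p : EuclideanSpace ℝ (Fin 2) | 0 < p 0 ∧ p 0 < 1 ∧ 0 < p 1 ∧ p 1 < p 0 ^ α}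
    ⊆ {p : EuclideanSpace ℝ (Fin 2) | 0 < p 0 ∧ p 0 < t ∧ 0 < p 1 ∧ p 1 < p 0 ^ α} := by
  rintro p ⟨hb, h0, _, h2, h3⟩
  refine ⟨h0, ?_, h2, h3⟩
  have hn : ‖p‖ < t := by simpa [dist_eq_norm] using hb
  have h01 : p 0 ≤ ‖p‖ := by
    rw [norm_sq_eq]
    calc p 0 ≤ Real.sqrt ((p 0)^2) := by rw [Real.sqrt_sq_eq_abs]; exact le_abs_self _
    _ ≤ _ := Real.sqrt_le_sqrt (by nlinarith [sq_nonneg (p 1)])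
  linarith

lemma lower_incl (α t : ℝ) (hα : 1 < α) (ht : 0 < t) (ht1 : t < 1) :
    {p : EuclideanSpace ℝ (Fin 2) | 0 < p 0 ∧ p 0 < t * (1 - t ^ (2*(α-1))) ∧ 0 < p 1 ∧
        p 1 < p 0 ^ α}
    ⊆ ball (0 : EuclideanSpace ℝ (Fin 2)) t ∩
      {p : EuclideanSpace ℝ (Fin 2) | 0 < p 0 ∧ p 0 < 1 ∧ 0 < p 1 ∧ p 1 < p 0 ^ α} := by
  set ε := t ^ (2*(α-1)) with hε
  have hβ : 0 < 2*(α-1) := by linarith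
  have hε0 : 0 < ε := Real.rpow_pos_of_pos ht _
  have hε1 : ε < 1 := Real.rpow_lt_one ht.le ht1 hβ
  set s := t * (1 - ε) with hs
  have hs0 : 0 < s := mul_pos ht (by linarith)
  have hst : s < t := by nlinarith
  rintro p ⟨h0, h1, h2, h3⟩
  have hpα : p 0 ^ α < s ^ α := Real.rpow_lt_rpow h0.le h1 (by linarith)
  have hsα : s ^ α ≤ t ^ α := Real.rpow_le_rpow hs0.le hst.le (by linarith)
  have hmain : (p 0)^2 + (p 1)^2 < t^2 := by
    have hp1 : p 1 < t ^ α := lt_of_lt_of_le (h3.trans hpα) hsα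
    have hp1sq : (p 1)^2 < (t ^ α)^2 := by
      have := Real.rpow_pos_of_pos ht α
      nlinarith
    have htα : (t ^ α)^2 = t^2 * ε := by
      rw [← Real.rpow_natCast (t ^ α) 2, ← Real.rpow_natCast t 2,
        ← Real.rpow_mul ht.le, ← Real.rpow_add ht]
      norm_num
      ring_nf
    have hp0sq : (p 0)^2 < t^2 * (1-ε)^2 := by
      have : (p 0)^2 < s^2 := by nlinarith
      calc (p 0)^2 < s^2 := this
        _ = t^2*(1-ε)^2 := by rw [hs]; ring
    have : t^2*(1-ε)^2 + t^2*ε ≤ t^2 := by nlinarith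
    nlinarith [htα]
  constructor
  · rw [mem_ball, dist_eq_norm, sub_zero, norm_sq_eq]
    have := Real.sqrt_lt_sqrt (by positivity) hmain
    rwa [Real.sqrt_sq ht.le] at this
  · exact ⟨h0, by linarith, h2, h3⟩

end Stmt4Aux

open Stmt4Aux in
/-- For `A = {(0,0)}` and `Ω = {(x,y) : 0 < y < x^α, 0 < x < 1}` with `α > 1`,
the relative box dimension exists and equals `1 - α`, and the relative Minkowski
content is `M^{1-α}(A,Ω) = 1/(1+α)`. -/
theorem stmt_4 (α : ℝ) (hα : 1 < α)
    (A : Set (EuclideanSpace ℝ (Fin 2))) (hA : A = {0})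
    (Ω : Set (EuclideanSpace ℝ (Fin 2)))
    (hΩ : Ω = {p : EuclideanSpace ℝ (Fin 2) |
      0 < p 0 ∧ p 0 < 1 ∧ 0 < p 1 ∧ p 1 < p 0 ^ α}) :
    relUpperBoxDim 2 A Ω = 1 - α ∧ relLowerBoxDim 2 A Ω = 1 - α ∧
      Filter.Tendsto
        (fun t : ℝ =>
          volume (Metric.thickening t A ∩ Ω) / ENNReal.ofReal (t ^ ((2 : ℝ) - (1 - α))))
        (nhdsWithin 0 (Set.Ioi 0)) (nhds (ENNReal.ofReal (1 / (1 + α)))) := by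
  subst hA hΩ
  set Ω : Set (EuclideanSpace ℝ (Fin 2)) :=
    {p : EuclideanSpace ℝ (Fin 2) | 0 < p 0 ∧ p 0 < 1 ∧ 0 < p 1 ∧ p 1 < p 0 ^ α} with hΩdef
  have hα1 : (0:ℝ) < α + 1 := by linarith
  have hαβ : 0 < 2*(α-1) := by linarith
  have hE : (2 : ℝ) - (1 - α) = α + 1 := by ring
  have hc : (1:ℝ)/(1+α) = 1/(α+1) := by ring
  set c : ENNReal := ENNReal.ofReal (1/(α+1)) with hcdef
  have hmem : Set.Ioo (0:ℝ) 1 ∈ nhdsWithin (0:ℝ) (Set.Ioi 0) :=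
    Ioo_mem_nhdsGT_of_mem (by constructor <;> norm_num)
  set V : ℝ → ENNReal := fun t =>
    volume (Metric.thickening t ({0} : Set (EuclideanSpace ℝ (Fin 2))) ∩ Ω) with hVdef
  -- sandwich bounds
  have hVub : ∀ t : ℝ, t ∈ Set.Ioo (0:ℝ) 1 →
      V t ≤ ENNReal.ofReal (t ^ (α+1) / (α+1)) := by
    intro t ht
    simp only [hVdef, Metric.thickening_singleton]
    rw [← volS α t (by linarith) ht.1]
    exact measure_mono (upper_incl α t)
  have hVlb : ∀ t : ℝ, t ∈ Set.Ioo (0:ℝ) 1 →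
      ENNReal.ofReal ((t * (1 - t ^ (2*(α-1)))) ^ (α+1) / (α+1)) ≤ V t := by
    intro t ht
    have hε1 : t ^ (2*(α-1)) < 1 := Real.rpow_lt_one ht.1.le ht.2 hαβ
    simp only [hVdef, Metric.thickening_singleton]
    rw [← volS α (t * (1 - t ^ (2*(α-1)))) (by linarith) (by nlinarith [ht.1])]
    exact measure_mono (lower_incl α t hα ht.1 ht.2)
  -- main tendsto
  have hmain : Filter.Tendsto (fun t : ℝ => V t / ENNReal.ofReal (t ^ ((2:ℝ) - (1 - α))))
      (nhdsWithin 0 (Set.Ioi 0)) (nhds c) := by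
    apply tendsto_of_tendsto_of_tendsto_of_le_of_le'
      (g := fun t : ℝ => ENNReal.ofReal ((1 - t ^ (2*(α-1))) ^ (α+1) / (α+1)))
      (h := fun _ : ℝ => c)
    · -- lower tendsto
      have h1 : Filter.Tendsto (fun t : ℝ => t ^ (2*(α-1)))
          (nhdsWithin 0 (Set.Ioi 0)) (nhds 0) := by
        have := (Real.continuousAt_rpow_const 0 (2*(α-1)) (Or.inr hαβ.le)).tendsto
        rw [Real.zero_rpow hαβ.ne'] at this
        exact this.mono_left nhdsWithin_le_nhds
      have h3 : Filter.Tendsto (fun t : ℝ => (1 : ℝ) - t ^ (2*(α-1)))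
          (nhdsWithin 0 (Set.Ioi 0)) (nhds 1) := by
        have := (tendsto_const_nhds (x := (1:ℝ))
          (f := nhdsWithin (0:ℝ) (Set.Ioi 0))).sub h1
        simpa using this
      have h4 := h3.rpow_const (p := α + 1) (Or.inl one_ne_zero)
      rw [Real.one_rpow] at h4
      have h5 := h4.div_const (α + 1)
      exact (ENNReal.continuous_ofReal.tendsto _).comp h5
    · exact tendsto_const_nhds
    · -- lower bound eventually
      filter_upwards [hmem] with t ht
      have ht0 := ht.1
      have hε1 : t ^ (2*(α-1)) < 1 := Real.rpow_lt_one ht0.le ht.2 hαβ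
      have hD0 : ENNReal.ofReal (t ^ ((2:ℝ) - (1 - α))) ≠ 0 := by
        simp only [ne_eq, ENNReal.ofReal_eq_zero, not_le]
        exact Real.rpow_pos_of_pos ht0 _
      rw [ENNReal.le_div_iff_mul_le (Or.inl hD0) (Or.inl ENNReal.ofReal_ne_top)]
      refine le_trans ?_ (hVlb t ht)
      rw [hE, ← ENNReal.ofReal_mul
        (div_nonneg (Real.rpow_nonneg (by linarith) _) hα1.le)]
      apply ENNReal.ofReal_le_ofReal
      rw [Real.mul_rpow ht0.le (by linarith)]
      exact le_of_eq (by ring)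
    · -- upper bound eventually
      filter_upwards [hmem] with t ht
      have ht0 := ht.1
      have hD0 : ENNReal.ofReal (t ^ ((2:ℝ) - (1 - α))) ≠ 0 := by
        simp only [ne_eq, ENNReal.ofReal_eq_zero, not_le]
        exact Real.rpow_pos_of_pos ht0 _
      rw [ENNReal.div_le_iff_le_mul (Or.inl hD0) (Or.inl ENNReal.ofReal_ne_top)]
      refine le_trans (hVub t ht) ?_
      rw [hE, hcdef, ← ENNReal.ofReal_mul (by positivity)]
      apply ENNReal.ofReal_le_ofReal
      exact le_of_eq (by ring)
  have hgoal3 : ENNReal.ofReal (1 / (1+α)) = c := by rw [hcdef, hc]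
  -- auxiliary limits for other exponents
  set F : ℝ → ℝ → ENNReal := fun r t => V t / ENNReal.ofReal (t ^ ((2:ℝ) - r)) with hFdef
  have hprod : ∀ r : ℝ, ∀ t ∈ Set.Ioi (0:ℝ),
      F r t = F (1-α) t * ENNReal.ofReal (t ^ (r - (1-α))) := by
    intro r t ht
    have ht0 : (0:ℝ) < t := ht
    have hkey : ∀ a : ℝ, V t / ENNReal.ofReal (t ^ ((2:ℝ) - a))
        = V t * ENNReal.ofReal (t ^ (a - 2)) := by
      intro a
      rw [div_eq_mul_inv, ← ENNReal.ofReal_inv_of_pos (Real.rpow_pos_of_pos ht0 _),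
        ← Real.rpow_neg ht0.le]
      norm_num
    rw [hFdef]
    simp only
    rw [hkey r, hkey (1-α), mul_assoc, ← ENNReal.ofReal_mul
      (Real.rpow_nonneg ht0.le _), ← Real.rpow_add ht0]
    congr 2
    ring_nf
  have hcne0 : c ≠ 0 := by
    rw [hcdef]
    simp only [ne_eq, ENNReal.ofReal_eq_zero, not_le]
    positivity
  have hrpow_zero : ∀ b : ℝ, 0 < b → Filter.Tendsto (fun t : ℝ => ENNReal.ofReal (t ^ b))
      (nhdsWithin 0 (Set.Ioi 0)) (nhds 0) := by
    intro b hb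
    have h1 : Filter.Tendsto (fun t : ℝ => t ^ b) (nhdsWithin 0 (Set.Ioi 0)) (nhds 0) := by
      have := (Real.continuousAt_rpow_const 0 b (Or.inr hb.le)).tendsto
      rw [Real.zero_rpow hb.ne'] at this
      exact this.mono_left nhdsWithin_le_nhds
    have := (ENNReal.continuous_ofReal.tendsto 0).comp h1
    simpa [Function.comp_def] using this
  have hzero : ∀ r : ℝ, 1 - α < r → Filter.Tendsto (F r)
      (nhdsWithin 0 (Set.Ioi 0)) (nhds 0) := by
    intro r hr
    have hb : 0 < r - (1-α) := by linarith
    have hT : Filter.Tendsto (fun t : ℝ => F (1-α) t * ENNReal.ofReal (t ^ (r - (1-α))))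
        (nhdsWithin 0 (Set.Ioi 0)) (nhds (c * 0)) :=
      ENNReal.Tendsto.mul hmain (Or.inr (by simp)) (hrpow_zero _ hb)
        (Or.inr ENNReal.ofReal_ne_top)
    rw [mul_zero] at hT
    exact hT.congr' (by filter_upwards [self_mem_nhdsWithin] with t ht
      using (hprod r t ht).symm)
  have htop : ∀ r : ℝ, r < 1 - α → Filter.Tendsto (F r)
      (nhdsWithin 0 (Set.Ioi 0)) (nhds ⊤) := by
    intro r hr
    have hb : 0 < (1-α) - r := by linarith
    have hinv : Filter.Tendsto (fun t : ℝ => ENNReal.ofReal (t ^ (r - (1-α))))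
        (nhdsWithin 0 (Set.Ioi 0)) (nhds ⊤) := by
      have h0 := (hrpow_zero _ hb)
      have := h0.inv
      rw [ENNReal.inv_zero] at this
      refine this.congr' ?_
      filter_upwards [self_mem_nhdsWithin] with t ht
      have ht0 : (0:ℝ) < t := ht
      rw [← ENNReal.ofReal_inv_of_pos (Real.rpow_pos_of_pos ht0 _),
        ← Real.rpow_neg ht0.le]
      congr 1
      ring_nf
    have hT : Filter.Tendsto (fun t : ℝ => F (1-α) t * ENNReal.ofReal (t ^ (r - (1-α))))
        (nhdsWithin 0 (Set.Ioi 0)) (nhds (c * ⊤)) :=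
      ENNReal.Tendsto.mul hmain (Or.inl hcne0) hinv (Or.inl ENNReal.top_ne_zero)
    rw [ENNReal.mul_top hcne0] at hT
    exact hT.congr' (by filter_upwards [self_mem_nhdsWithin] with t ht
      using (hprod r t ht).symm)
  have hmainF : Filter.Tendsto (F (1-α)) (nhdsWithin 0 (Set.Ioi 0)) (nhds c) := hmain
  -- identify the sets
  have hsetU : {r : ℝ | relUpperMinkowskiContent 2 ({0} : Set (EuclideanSpace ℝ (Fin 2))) Ω r = 0}
      = Set.Ioi (1-α) := by
    ext r
    have hcontent : relUpperMinkowskiContent 2 ({0} : Set (EuclideanSpace ℝ (Fin 2))) Ω r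
        = Filter.limsup (F r) (nhdsWithin 0 (Set.Ioi 0)) := by
      simp only [relUpperMinkowskiContent, hFdef, hVdef]
      norm_num
    simp only [Set.mem_setOf_eq, Set.mem_Ioi, hcontent]
    constructor
    · intro h
      by_contra hle
      push_neg at hle
      rcases eq_or_lt_of_le hle with heq | hlt
      · rw [heq] at h
        rw [hmainF.limsup_eq] at h
        exact hcne0 h
      · rw [(htop r hlt).limsup_eq] at h
        exact ENNReal.top_ne_zero h
    · intro h
      exact (hzero r h).limsup_eq
  have hsetL : {r : ℝ | relLowerMinkowskiContent 2 ({0} : Set (EuclideanSpace ℝ (Fin 2))) Ω r = 0}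
      = Set.Ioi (1-α) := by
    ext r
    have hcontent : relLowerMinkowskiContent 2 ({0} : Set (EuclideanSpace ℝ (Fin 2))) Ω r
        = Filter.liminf (F r) (nhdsWithin 0 (Set.Ioi 0)) := by
      simp only [relLowerMinkowskiContent, hFdef, hVdef]
      norm_num
    simp only [Set.mem_setOf_eq, Set.mem_Ioi, hcontent]
    constructor
    · intro h
      by_contra hle
      push_neg at hle
      rcases eq_or_lt_of_le hle with heq | hlt
      · rw [heq] at h
        rw [hmainF.liminf_eq] at h
        exact hcne0 h
      · rw [(htop r hlt).liminf_eq] at h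
        exact ENNReal.top_ne_zero h
    · intro h
      exact (hzero r h).liminf_eq
  refine ⟨?_, ?_, hgoal3 ▸ hmain⟩
  · rw [relUpperBoxDim, hsetU, csInf_Ioi]
  · rw [relLowerBoxDim, hsetL, csInf_Ioi]
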